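/- Let A be a k-algebra admitting an ℕ-filtration F such that gr_F(A) is a firm domain. Then A itself is a firm domain. (Lemma 2.1(1).) -/

import Mathlib

open scoped TensorProduct ENNReal

universe u v

variable (k : Type v) [Field k]

/-- An ℕ-filtration of a `k`-algebra `A`: an ascending chain of `k`-subspaces
`F 0 ⊆ F 1 ⊆ ⋯` with `k·1 ⊆ F 0`, `⋃ᵢ F i = A` and `F i * F j ⊆ F (i + j)`. -/
structure AlgFiltration (A : Type u) [Ring A] [Algebra k A] where
  F : ℕ → Submodule k A
  one_mem : (1 : A) ∈ F 0
  mono : ∀ i, F i ≤ F (i + 1)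
  exhaustive : ∀ a : A, ∃ i, a ∈ F i
  mul_mem : ∀ i j : ℕ, ∀ x ∈ F i, ∀ y ∈ F j, x * y ∈ F (i + j)

namespace AlgFiltration

variable {k} {A : Type u} [Ring A] [Algebra k A] (𝓕 : AlgFiltration k A)

/-- The Rees algebra `⊕ᵢ (F i) Xⁱ ⊆ A[X]` of a filtration. -/
def rees : Subalgebra k (Polynomial A) where
  carrier := {p | ∀ i, p.coeff i ∈ 𝓕.F i}
  add_mem' := fun hp hq i => by
    simpa using (𝓕.F i).add_mem (hp i) (hq i)
  mul_mem' := fun {p q} hp hq i => by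
    show (p * q).coeff i ∈ 𝓕.F i
    rw [Polynomial.coeff_mul]
    refine Submodule.sum_mem _ fun x hx => ?_
    have h := 𝓕.mul_mem x.1 x.2 _ (hp x.1) _ (hq x.2)
    rwa [show x.1 + x.2 = i from by simpa using hx] at h
  algebraMap_mem' := fun c i => by
    rcases i with _ | i
    · simpa [Polynomial.algebraMap_apply, Algebra.algebraMap_eq_smul_one] using
        (𝓕.F 0).smul_mem c 𝓕.one_mem
    · simp [Polynomial.algebraMap_apply]

/-- The element `X` of the Rees algebra. -/
noncomputable def xElem : 𝓕.rees :=
  ⟨Polynomial.X, fun i => by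
    rcases i with _ | _ | i
    · simp
    · simpa [Polynomial.coeff_X] using 𝓕.mono 0 𝓕.one_mem
    · simp [Polynomial.coeff_X]⟩

/-- The associated graded algebra `gr_F(A) = ⊕ᵢ F i / F (i-1)` of a filtration, realized as
the Rees algebra modulo the two-sided ideal generated by the central element `X`. -/
def gr : Type u := RingQuot (fun a b : 𝓕.rees => a = 𝓕.xElem ∧ b = 0)

noncomputable instance : Ring 𝓕.gr :=
  inferInstanceAs (Ring (RingQuot (fun a b : 𝓕.rees => a = 𝓕.xElem ∧ b = 0)))

noncomputable instance : Algebra k 𝓕.gr :=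
  inferInstanceAs (Algebra k (RingQuot (fun a b : 𝓕.rees => a = 𝓕.xElem ∧ b = 0)))

/-- The `k`-linear map sending `a ∈ F i` to the monomial `a Xⁱ` in the Rees algebra. -/
noncomputable def monoMap (i : ℕ) : 𝓕.F i →ₗ[k] 𝓕.rees where
  toFun a :=
    ⟨Polynomial.monomial i (a : A), fun j => by
      rcases eq_or_ne j i with rfl | h
      · simp only [Polynomial.coeff_monomial, if_pos rfl]
        exact a.2
      · simp [Polynomial.coeff_monomial, h, Ne.symm h]⟩
  map_add' a b := by
    ext
    simp
  map_smul' c a := by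
    ext
    simp

/-- The canonical projection from the Rees algebra onto the associated graded algebra. -/
noncomputable def grProj : 𝓕.rees →ₐ[k] 𝓕.gr :=
  RingQuot.mkAlgHom k (fun a b : 𝓕.rees => a = 𝓕.xElem ∧ b = 0)

/-- The degree-`i` homogeneous component `F i / F (i-1)` of the associated graded algebra,
realized as the image of `(F i) Xⁱ` under the projection. -/
noncomputable def grPiece (i : ℕ) : Submodule k 𝓕.gr :=
  LinearMap.range (𝓕.grProj.toLinearMap ∘ₗ 𝓕.monoMap i)

end AlgFiltration

/-- A `k`-algebra `A` is a firm domain if `A ⊗[k] B` is a domain for every `k`-algebra `B`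
which is a domain. -/
def IsFirmDomain (A : Type u) [Ring A] [Algebra k A] : Prop :=
  ∀ (B : Type u) [Ring B] [Algebra k B], IsDomain B → IsDomain (A ⊗[k] B)

/-- A filtration is good if its associated graded algebra is a domain.
`uGood k A` is the subspace of universally degree-`0` elements with respect to good
ℕ-filtrations: the intersection of `F 0` over all good ℕ-filtrations of `A`. -/
noncomputable def uGood (A : Type u) [Ring A] [Algebra k A] : Submodule k A :=
  ⨅ (𝓕 : AlgFiltration k A) (_ : IsDomain 𝓕.gr), 𝓕.F 0

/-- A filtration is firm if its associated graded algebra is a firm domain.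
`uFirm k A` is the intersection of `F 0` over all firm ℕ-filtrations of `A`. -/
noncomputable def uFirm (A : Type u) [Ring A] [Algebra k A] : Submodule k A :=
  ⨅ (𝓕 : AlgFiltration k A) (_ : IsFirmDomain k 𝓕.gr), 𝓕.F 0

/-- The Gelfand–Kirillov dimension of a `k`-algebra `A`: the supremum, over all
finite-dimensional subspaces `V ⊆ A` containing `1`, of `limsup_n log(dim Vⁿ)/log n`. -/
noncomputable def GKdim (A : Type u) [Ring A] [Algebra k A] : ℝ≥0∞ :=
  ⨆ (V : Submodule k A) (_ : (1 : A) ∈ V) (_ : FiniteDimensional k V),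
    Filter.limsup
      (fun n : ℕ => ENNReal.ofReal (Real.log (Module.finrank k ↥(V ^ n)) / Real.log n))
      Filter.atTop

/-- `R` is GKdim-additive if it has finite GK-dimension and
`GKdim (A ⊗ R) = GKdim A + GKdim R` for every `k`-algebra `A`. -/
def IsGKAdditive (R : Type u) [Ring R] [Algebra k R] : Prop :=
  GKdim k R < ⊤ ∧
    ∀ (A : Type u) [Ring A] [Algebra k A], GKdim k (A ⊗[k] R) = GKdim k A + GKdim k R

/-- Membership in the family `𝓡₁` of GKdim-additive firm domains `R` with `u_firm(R) = k·1`. -/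
def InR1 (R : Type u) [Ring R] [Algebra k R] : Prop :=
  IsGKAdditive k R ∧ IsFirmDomain k R ∧ uFirm k R = 1

/-- Membership in the family `𝓡₂` of GKdim-additive domains `R` with `u_good(R) = k·1`. -/
def InR2 (R : Type u) [Ring R] [Algebra k R] : Prop :=
  IsGKAdditive k R ∧ IsDomain R ∧ uGood k R = 1

/-- The canonical image of `P ⊗ Q` in `M ⊗[k] N`, for subspaces `P ⊆ M` and `Q ⊆ N`. -/
def tensorSub {M N : Type u} [Ring M] [Ring N] [Algebra k M] [Algebra k N]
    (P : Submodule k M) (Q : Submodule k N) : Submodule k (M ⊗[k] N) :=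
  Submodule.span k {z | ∃ x ∈ P, ∃ y ∈ Q, z = x ⊗ₜ[k] y}


set_option synthInstance.maxHeartbeats 1000000
set_option maxHeartbeats 1000000

section Aux

variable {k : Type v} [Field k] {A : Type u} [Ring A] [Algebra k A] (𝓕 : AlgFiltration k A)

namespace AlgFiltration

/-- The relation defining `gr`. -/
abbrev grRel : 𝓕.rees → 𝓕.rees → Prop := fun a b => a = 𝓕.xElem ∧ b = 0

lemma mem_rees_iff {p : Polynomial A} : p ∈ 𝓕.rees ↔ ∀ i, p.coeff i ∈ 𝓕.F i := Iff.rfl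

/-- The "ideal" predicate: coefficient of degree `d` lies in `F (d-1)`. -/
def InJ (w : Polynomial A) : Prop := w.coeff 0 = 0 ∧ ∀ d, w.coeff (d + 1) ∈ 𝓕.F d

lemma inJ_mul_left {a : Polynomial A} (ha : a ∈ 𝓕.rees) {w : Polynomial A}
    (hw : 𝓕.InJ w) : 𝓕.InJ (a * w) := by
  constructor
  · rw [Polynomial.mul_coeff_zero, hw.1, mul_zero]
  · intro d
    rw [Polynomial.coeff_mul]
    refine Submodule.sum_mem _ fun x hx => ?_
    have hxy := Finset.HasAntidiagonal.mem_antidiagonal.mp hx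
    by_cases h2 : x.2 = 0
    · rw [h2, hw.1, mul_zero]; exact Submodule.zero_mem _
    · have hsum : x.1 + (x.2 - 1) = d := by omega
      have := 𝓕.mul_mem x.1 (x.2 - 1) _ ((𝓕.mem_rees_iff.mp ha) x.1) _ (hw.2 (x.2 - 1))
      rw [hsum] at this
      have he : x.2 - 1 + 1 = x.2 := by omega
      rwa [he] at this

lemma inJ_mul_right {a : Polynomial A} (ha : a ∈ 𝓕.rees) {w : Polynomial A}
    (hw : 𝓕.InJ w) : 𝓕.InJ (w * a) := by
  constructor
  · rw [Polynomial.mul_coeff_zero, hw.1, zero_mul]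
  · intro d
    rw [Polynomial.coeff_mul]
    refine Submodule.sum_mem _ fun x hx => ?_
    have hxy := Finset.HasAntidiagonal.mem_antidiagonal.mp hx
    by_cases h1 : x.1 = 0
    · rw [h1, hw.1, zero_mul]; exact Submodule.zero_mem _
    · have hsum : (x.1 - 1) + x.2 = d := by omega
      have := 𝓕.mul_mem (x.1 - 1) x.2 _ (hw.2 (x.1 - 1)) _ ((𝓕.mem_rees_iff.mp ha) x.2)
      rw [hsum] at this
      have he : x.1 - 1 + 1 = x.1 := by omega
      rwa [he] at this

lemma inJ_neg {w : Polynomial A} (h : 𝓕.InJ w) : 𝓕.InJ (-w) :=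
  ⟨by simp [h.1], fun d => by simpa using (𝓕.F d).neg_mem (h.2 d)⟩

lemma inJ_add {w1 w2 : Polynomial A} (h1 : 𝓕.InJ w1) (h2 : 𝓕.InJ w2) : 𝓕.InJ (w1 + w2) :=
  ⟨by simp [Polynomial.coeff_add, h1.1, h2.1], fun d => by
    simpa using (𝓕.F d).add_mem (h1.2 d) (h2.2 d)⟩

lemma inJ_of_ringConGen {p q : 𝓕.rees} (h : RingConGen.Rel 𝓕.grRel p q) :
    𝓕.InJ ((p : Polynomial A) - (q : Polynomial A)) := by
  induction h with
  | of a b hab =>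
    rcases hab with ⟨rfl, rfl⟩
    have hX : ((𝓕.xElem : 𝓕.rees) : Polynomial A) - ((0 : 𝓕.rees) : Polynomial A)
        = Polynomial.X := by simp [xElem]
    rw [hX]
    constructor
    · simp
    · intro d
      rcases d with _ | d
      · simpa using 𝓕.one_mem
      · simp [Polynomial.coeff_X]
  | refl a => simp [InJ]
  | symm _ ih =>
    rename_i a b _
    have : ((b : Polynomial A) - a) = -(((a : Polynomial A)) - b) := by noncomm_ring
    rw [this]
    exact 𝓕.inJ_neg ih
  | trans _ _ ih1 ih2 =>
    rename_i a b c _ _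
    have : ((a : Polynomial A) - c) = ((a : Polynomial A) - b) + ((b : Polynomial A) - c) := by
      noncomm_ring
    rw [this]
    exact 𝓕.inJ_add ih1 ih2
  | add _ _ ih1 ih2 =>
    rename_i a b c d _ _
    have : (((a + c : 𝓕.rees) : Polynomial A) - ((b + d : 𝓕.rees) : Polynomial A))
        = ((a : Polynomial A) - b) + ((c : Polynomial A) - d) := by
      push_cast; noncomm_ring
    rw [this]
    exact 𝓕.inJ_add ih1 ih2
  | mul _ _ ih1 ih2 =>
    rename_i a b c d _ _
    have : (((a * c : 𝓕.rees) : Polynomial A) - ((b * d : 𝓕.rees) : Polynomial A))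
        = (a : Polynomial A) * ((c : Polynomial A) - d)
          + ((a : Polynomial A) - b) * (d : Polynomial A) := by
      push_cast; noncomm_ring
    rw [this]
    exact 𝓕.inJ_add (𝓕.inJ_mul_left a.2 ih2) (𝓕.inJ_mul_right d.2 ih1)

lemma inJ_of_grProj_eq {p q : 𝓕.rees} (h : 𝓕.grProj p = 𝓕.grProj q) :
    𝓕.InJ ((p : Polynomial A) - (q : Polynomial A)) := by
  apply 𝓕.inJ_of_ringConGen
  rw [← RingQuot.eqvGen_rel_eq]
  have h' : RingQuot.mkRingHom 𝓕.grRel p = RingQuot.mkRingHom 𝓕.grRel q := by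
    have hc := RingQuot.mkAlgHom_coe k 𝓕.grRel
    rw [← hc]
    exact h
  rw [RingQuot.mkRingHom_def] at h'
  exact Quot.eq.mp (congrArg RingQuot.toQuot h')

/-- The symbol map in degree `d`. -/
noncomputable def sMap (d : ℕ) : 𝓕.F d →ₗ[k] 𝓕.gr :=
  𝓕.grProj.toLinearMap ∘ₗ 𝓕.monoMap d

lemma monoMap_coe (d : ℕ) (a : 𝓕.F d) :
    ((𝓕.monoMap d a : 𝓕.rees) : Polynomial A) = Polynomial.monomial d (a : A) := rfl

lemma grProj_xElem : 𝓕.grProj 𝓕.xElem = 0 := by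
  have : 𝓕.grProj 𝓕.xElem = 𝓕.grProj 0 :=
    RingQuot.mkAlgHom_rel k (⟨rfl, rfl⟩ : 𝓕.grRel 𝓕.xElem 0)
  rwa [map_zero] at this

lemma sMap_zero_injective : Function.Injective (𝓕.sMap 0) := by
  rw [injective_iff_map_eq_zero]
  intro a ha
  have h0 : 𝓕.grProj (𝓕.monoMap 0 a) = 𝓕.grProj 0 := by
    rw [map_zero]; exact ha
  have := (𝓕.inJ_of_grProj_eq h0).1
  rw [ZeroMemClass.coe_zero] at this
  simp only [monoMap_coe, Polynomial.coeff_monomial, if_pos rfl, sub_zero] at this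
  exact Subtype.ext this

lemma sMap_succ_eq_zero_iff (d : ℕ) (a : 𝓕.F (d + 1)) :
    𝓕.sMap (d + 1) a = 0 ↔ (a : A) ∈ 𝓕.F d := by
  constructor
  · intro ha
    have h0 : 𝓕.grProj (𝓕.monoMap (d + 1) a) = 𝓕.grProj 0 := by
      rw [map_zero]; exact ha
    have := (𝓕.inJ_of_grProj_eq h0).2 d
    rw [ZeroMemClass.coe_zero] at this
    simpa only [monoMap_coe, Polynomial.coeff_monomial, if_pos rfl, ↓reduceIte, sub_zero] using this
  · intro ha
    have key : 𝓕.monoMap (d + 1) a = 𝓕.xElem * 𝓕.monoMap d ⟨(a : A), ha⟩ := by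
      apply Subtype.ext
      show (Polynomial.monomial (d + 1) (a : A)) = _
      rw [show ((𝓕.xElem * 𝓕.monoMap d ⟨(a : A), ha⟩ : 𝓕.rees) : Polynomial A)
          = Polynomial.X * Polynomial.monomial d (a : A) from rfl]
      rw [Polynomial.X_mul_monomial]
    show 𝓕.grProj (𝓕.monoMap (d + 1) a) = 0
    rw [key, map_mul, 𝓕.grProj_xElem, zero_mul]

lemma sMap_exact (d : ℕ) :
    Function.Exact (Submodule.inclusion (𝓕.mono d)) (𝓕.sMap (d + 1)) := by
  intro y
  rw [𝓕.sMap_succ_eq_zero_iff d y]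
  constructor
  · intro hy
    exact ⟨⟨(y : A), hy⟩, Subtype.ext rfl⟩
  · rintro ⟨z, rfl⟩
    exact z.2

lemma sMap_mul (d e : ℕ) (a : 𝓕.F d) (b : 𝓕.F e) :
    𝓕.sMap (d + e) ⟨(a : A) * (b : A), 𝓕.mul_mem d e _ a.2 _ b.2⟩
      = 𝓕.sMap d a * 𝓕.sMap e b := by
  show 𝓕.grProj _ = 𝓕.grProj _ * 𝓕.grProj _
  rw [← map_mul]
  congr 1
  apply Subtype.ext
  show Polynomial.monomial (d + e) ((a : A) * (b : A)) = _
  rw [show ((𝓕.monoMap d a * 𝓕.monoMap e b : 𝓕.rees) : Polynomial A)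
      = Polynomial.monomial d (a : A) * Polynomial.monomial e (b : A) from rfl]
  rw [Polynomial.monomial_mul_monomial]

section Tensor

variable (B : Type u) [Ring B] [Algebra k B]

/-- Inclusion `F d ⊗ B → A ⊗ B`. -/
noncomputable def tMap (d : ℕ) : (𝓕.F d ⊗[k] B) →ₗ[k] A ⊗[k] B :=
  LinearMap.rTensor B (𝓕.F d).subtype

/-- Symbol map `F d ⊗ B → gr ⊗ B`. -/
noncomputable def σMap (d : ℕ) : (𝓕.F d ⊗[k] B) →ₗ[k] 𝓕.gr ⊗[k] B :=
  LinearMap.rTensor B (𝓕.sMap d)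

lemma tMap_injective (d : ℕ) : Function.Injective (𝓕.tMap B d) :=
  Module.Flat.rTensor_preserves_injective_linearMap _ (𝓕.F d).injective_subtype

lemma tMap_comp_incl (d : ℕ) :
    (𝓕.tMap B (d + 1)) ∘ₗ LinearMap.rTensor B (Submodule.inclusion (𝓕.mono d))
      = 𝓕.tMap B d := by
  have hcomp : (𝓕.F (d + 1)).subtype ∘ₗ Submodule.inclusion (𝓕.mono d)
      = (𝓕.F d).subtype := by
    ext x; rfl
  rw [tMap, tMap, ← LinearMap.rTensor_comp, hcomp]

lemma range_tMap_mono {d e : ℕ} (h : d ≤ e) :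
    LinearMap.range (𝓕.tMap B d) ≤ LinearMap.range (𝓕.tMap B e) := by
  induction e, h using Nat.le_induction with
  | base => exact le_refl _
  | succ e he ih =>
    refine le_trans ih ?_
    rw [← 𝓕.tMap_comp_incl B e]
    exact LinearMap.range_comp_le_range _ _

lemma exists_mem_range_tMap (x : A ⊗[k] B) :
    ∃ d, x ∈ LinearMap.range (𝓕.tMap B d) := by
  induction x with
  | zero => exact ⟨0, Submodule.zero_mem _⟩
  | tmul a b =>
    obtain ⟨i, hi⟩ := 𝓕.exhaustive a
    exact ⟨i, ⟨(⟨a, hi⟩ : 𝓕.F i) ⊗ₜ[k] b, by simp [tMap]⟩⟩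
  | add x y ihx ihy =>
    obtain ⟨d, hd⟩ := ihx
    obtain ⟨e, he⟩ := ihy
    refine ⟨max d e, Submodule.add_mem _ ?_ ?_⟩
    · exact 𝓕.range_tMap_mono B (le_max_left d e) hd
    · exact 𝓕.range_tMap_mono B (le_max_right d e) he

lemma tensor_mul_compat (d e : ℕ) (u : 𝓕.F d ⊗[k] B) (v : 𝓕.F e ⊗[k] B) :
    ∃ w : 𝓕.F (d + e) ⊗[k] B,
      𝓕.tMap B (d + e) w = (𝓕.tMap B d u) * (𝓕.tMap B e v) ∧
      𝓕.σMap B (d + e) w = (𝓕.σMap B d u) * (𝓕.σMap B e v) := by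
  induction u with
  | zero => exact ⟨0, by simp, by simp⟩
  | tmul a b =>
    induction v with
    | zero => exact ⟨0, by simp, by simp⟩
    | tmul a' b' =>
      refine ⟨(⟨(a : A) * (a' : A), 𝓕.mul_mem d e _ a.2 _ a'.2⟩ : 𝓕.F (d + e)) ⊗ₜ[k] (b * b'),
        ?_, ?_⟩
      · simp only [tMap, LinearMap.rTensor_tmul, Submodule.coe_subtype,
          Algebra.TensorProduct.tmul_mul_tmul]
      · simp only [σMap, LinearMap.rTensor_tmul, Algebra.TensorProduct.tmul_mul_tmul,
          𝓕.sMap_mul d e a a']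
    | add v1 v2 ih1 ih2 =>
      obtain ⟨w1, hw1, hw1'⟩ := ih1
      obtain ⟨w2, hw2, hw2'⟩ := ih2
      exact ⟨w1 + w2, by rw [map_add, hw1, hw2, map_add, mul_add],
        by rw [map_add, hw1', hw2', map_add, mul_add]⟩
  | add u1 u2 ih1 ih2 =>
    obtain ⟨w1, hw1, hw1'⟩ := ih1
    obtain ⟨w2, hw2, hw2'⟩ := ih2
    exact ⟨w1 + w2, by rw [map_add, hw1, hw2, map_add, add_mul],
      by rw [map_add, hw1', hw2', map_add, add_mul]⟩

lemma exists_symbol_ne_zero {x : A ⊗[k] B} (hx : x ≠ 0) :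
    ∃ (d : ℕ) (u : 𝓕.F d ⊗[k] B), 𝓕.tMap B d u = x ∧ 𝓕.σMap B d u ≠ 0 := by
  obtain ⟨d, u, hu⟩ : ∃ d u, 𝓕.tMap B d u = x := by
    obtain ⟨d, hd⟩ := 𝓕.exists_mem_range_tMap B x
    obtain ⟨u, hu⟩ := hd
    exact ⟨d, u, hu⟩
  induction d with
  | zero =>
    refine ⟨0, u, hu, ?_⟩
    intro hσ
    have hinj : Function.Injective (𝓕.σMap B 0) :=
      Module.Flat.rTensor_preserves_injective_linearMap _ 𝓕.sMap_zero_injective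
    have hu0 : u = 0 := hinj (by rw [hσ, map_zero])
    rw [hu0, map_zero] at hu
    exact hx hu.symm
  | succ d' ih =>
    by_cases hσ : 𝓕.σMap B (d' + 1) u = 0
    · have hexact := Module.Flat.rTensor_exact B (𝓕.sMap_exact d')
      obtain ⟨u', hu'⟩ := (hexact u).mp hσ
      refine ih u' ?_
      rw [← hu]
      have hcomp := congrArg (fun f => f u')
        (𝓕.tMap_comp_incl B d')
      simp only [LinearMap.coe_comp, Function.comp_apply] at hcomp
      rw [← hcomp]
      show 𝓕.tMap B (d' + 1) ((LinearMap.rTensor B (Submodule.inclusion (𝓕.mono d'))) u')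
        = 𝓕.tMap B (d' + 1) u
      rw [hu']
    · exact ⟨d' + 1, u, hu, hσ⟩

end Tensor

end AlgFiltration

end Aux

/-- Lemma 2.1(1): if `A` admits an ℕ-filtration whose associated graded algebra is a firm
domain, then `A` is a firm domain. -/
theorem statement14 {k : Type v} [Field k]
    (A : Type u) [Ring A] [Algebra k A]
    (𝓕 : AlgFiltration k A) (h : IsFirmDomain k 𝓕.gr) :
    IsFirmDomain k A := by
  intro B _ _ hB
  haveI : IsDomain (𝓕.gr ⊗[k] B) := h B hB
  haveI : Nontrivial (𝓕.gr ⊗[k] B) := ‹IsDomain (𝓕.gr ⊗[k] B)›.toNontrivial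
  -- Nontriviality of A ⊗ B
  have hone : (1 : A ⊗[k] B) ≠ 0 := by
    intro h10
    set one : 𝓕.F 0 ⊗[k] B := (⟨(1 : A), 𝓕.one_mem⟩ : 𝓕.F 0) ⊗ₜ[k] (1 : B) with hone_def
    have ht : 𝓕.tMap B 0 one = 1 := by
      simp [AlgFiltration.tMap, hone_def, Algebra.TensorProduct.one_def]
    have hzero : one = 0 := 𝓕.tMap_injective B 0 (by rw [ht, h10, map_zero])
    have hσ : 𝓕.σMap B 0 one = 1 := by
      have hmono : 𝓕.sMap 0 (⟨(1 : A), 𝓕.one_mem⟩ : 𝓕.F 0) = 1 := by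
        show 𝓕.grProj (𝓕.monoMap 0 ⟨(1 : A), 𝓕.one_mem⟩) = 1
        have : 𝓕.monoMap 0 (⟨(1 : A), 𝓕.one_mem⟩ : 𝓕.F 0) = 1 := by
          apply Subtype.ext
          show Polynomial.monomial 0 (1 : A) = 1
          exact Polynomial.monomial_zero_one
        rw [this, map_one]
      simp [AlgFiltration.σMap, hone_def, hmono, Algebra.TensorProduct.one_def]
    rw [hzero, map_zero] at hσ
    obtain ⟨a, b, hab⟩ := exists_pair_ne (𝓕.gr ⊗[k] B)
    apply hab
    rw [← mul_one a, ← hσ, mul_zero, ← mul_one b, ← hσ, mul_zero]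
  haveI : Nontrivial (A ⊗[k] B) := nontrivial_of_ne 1 0 hone
  haveI : NoZeroDivisors (A ⊗[k] B) := by
    constructor
    intro x y hxy
    by_contra hcon
    push_neg at hcon
    obtain ⟨hx, hy⟩ := hcon
    obtain ⟨d, u, hu, hσu⟩ := 𝓕.exists_symbol_ne_zero B hx
    obtain ⟨e, v, hv, hσv⟩ := 𝓕.exists_symbol_ne_zero B hy
    obtain ⟨w, hw, hw'⟩ := 𝓕.tensor_mul_compat B d e u v
    have hw0 : w = 0 := by
      apply 𝓕.tMap_injective B (d + e)
      rw [hw, hu, hv, hxy, map_zero]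
    rw [hw0, map_zero] at hw'
    exact mul_ne_zero hσu hσv hw'.symm
  exact NoZeroDivisors.to_isDomain _
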